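/- With the above setting, for every 0 < k ≤ l: |I_k(0)| = |R(v_k)| - Σ_{m : 0 ≤ m < k, up(v_m) = v_k} |R(v_m)|. -/

import Mathlib

/-- Theorem 1 of the paper: for every `0 < k ≤ l`,
`|I_k 0| = |R (v k)| - Σ_{m < k, up m = k} |R (v m)|`. -/
theorem Ik_zero_card {α : Type*} {n : ℕ} (s : Fin n → List α)
    (i : Fin n) (l : ℕ) (v : ℕ → List α)
    (hsuf : ∀ m ≤ l, v m <:+ s i) (hl : v l = [])
    (hdec : ∀ m k, m < k → k ≤ l → (v k).length < (v m).length)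
    (hPpre : ∀ m ≤ l, ∃ j : Fin n, v m <+: s j)
    (R : List α → Finset (Fin n))
    (hR : ∀ u j, j ∈ R u ↔ (u <+: s j ∧ u ≠ s j))
    (I : ℕ → ℕ → Finset (Fin n))
    (hIk : ∀ k ≤ l, I k k = R (v k))
    (hI : ∀ k ≤ l, ∀ m < k, I k m = I k (m+1) \ R (v m))
    (up : ℕ → ℕ)
    (hup : ∀ m < l, m < up m ∧ up m ≤ l ∧ v (up m) <+: v m ∧
      ∀ q, m < q → q < up m → ¬ (v q <+: v m)) :
    ∀ k, 0 < k → k ≤ l →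
      (I k 0).card = (R (v k)).card -
        ∑ m ∈ (Finset.range k).filter (fun m => up m = k), (R (v m)).card := by
  -- R is antitone with respect to the prefix relation
  have hRmono : ∀ (u w : List α) (j : Fin n), w <+: u → j ∈ R u → j ∈ R w := by
    intro u w j hwu hju
    obtain ⟨hju1, hju2⟩ := (hR u j).mp hju
    refine (hR w j).mpr ⟨hwu.trans hju1, ?_⟩
    intro hwe
    subst hwe
    exact hju2 (hju1.eq_of_length (le_antisymm hju1.length_le hwu.length_le))
  -- if j lies in both R (v a) and R (v b) with a < b ≤ l, then v b <+: v a
  have hcmp : ∀ a b (j : Fin n), a < b → b ≤ l → j ∈ R (v a) → j ∈ R (v b) →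
      v b <+: v a := by
    intro a b j hab hbl hja hjb
    obtain ⟨hja1, _⟩ := (hR _ j).mp hja
    obtain ⟨hjb1, _⟩ := (hR _ j).mp hjb
    exact List.prefix_of_prefix_length_le hjb1 hja1 (le_of_lt (hdec a b hab hbl))
  intro k hk0 hkl
  -- characterization of I k p
  have hchar : ∀ p ≤ k, ∀ j : Fin n,
      j ∈ I k p ↔ (j ∈ R (v k) ∧ ∀ q, p ≤ q → q < k → j ∉ R (v q)) := by
    have key : ∀ d p, p + d = k → ∀ j : Fin n,
        j ∈ I k p ↔ (j ∈ R (v k) ∧ ∀ q, p ≤ q → q < k → j ∉ R (v q)) := by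
      intro d
      induction d with
      | zero =>
        intro p hp j
        have : p = k := by omega
        subst this
        rw [hIk _ hkl]
        constructor
        · intro h; exact ⟨h, fun q hq1 hq2 _ => by omega⟩
        · intro h; exact h.1
      | succ d ih =>
        intro p hp j
        have hpk : p < k := by omega
        rw [hI k hkl p hpk, Finset.mem_sdiff, ih (p+1) (by omega) j]
        constructor
        · rintro ⟨⟨h1, h2⟩, h3⟩
          refine ⟨h1, fun q hq1 hq2 => ?_⟩
          rcases eq_or_lt_of_le hq1 with h | h
          · subst h; exact h3
          · exact h2 q (by omega) hq2
        · rintro ⟨h1, h2⟩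
          exact ⟨⟨h1, fun q hq1 hq2 => h2 q (by omega) hq2⟩, h2 p le_rfl hpk⟩
    intro p hp
    exact key (k - p) p (by omega)
  -- main downward induction
  have hmain : ∀ d m, m + d = k →
      (I k m).card = (R (v k)).card -
        ∑ q ∈ (Finset.Ico m k).filter (fun q => up q = k), (R (v q)).card := by
    intro d
    induction d with
    | zero =>
      intro m hm
      have : m = k := by omega
      subst this
      rw [hIk _ hkl]; simp
    | succ d ih =>
      intro m hm
      have hmk : m < k := by omega
      have hml : m < l := lt_of_lt_of_le hmk hkl
      obtain ⟨hu1, hu2, hu3, hu4⟩ := hup m hml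
      rw [hI k hkl m hmk]
      have hins : Finset.Ico m k = insert m (Finset.Ico (m+1) k) :=
        (Finset.insert_Ico_add_one_left_eq_Ico hmk).symm
      by_cases hum : up m = k
      · -- R (v m) ⊆ I k (m+1)
        have hvk : v k <+: v m := hum ▸ hu3
        have hsub : R (v m) ⊆ I k (m+1) := by
          intro j hj
          rw [hchar (m+1) (by omega) j]
          refine ⟨hRmono _ _ j hvk hj, fun q hq1 hq2 hjq => ?_⟩
          exact hu4 q (by omega) (by omega) (hcmp m q j (by omega) (by omega) hj hjq)
        rw [Finset.card_sdiff_of_subset hsub]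
        have hih := ih (m+1) (by omega)
        have hsum : ∑ q ∈ (Finset.Ico m k).filter (fun q => up q = k), (R (v q)).card
            = (R (v m)).card +
              ∑ q ∈ (Finset.Ico (m+1) k).filter (fun q => up q = k), (R (v q)).card := by
          rw [hins, Finset.filter_insert, if_pos hum, Finset.sum_insert (by simp)]
        have hle : (R (v m)).card ≤ (I k (m+1)).card := Finset.card_le_card hsub
        omega
      · -- I k (m+1) is disjoint from R (v m)
        have hdisj : Disjoint (I k (m+1)) (R (v m)) := by
          rw [Finset.disjoint_right]
          intro j hj hjI
          obtain ⟨hj1, hj2⟩ := (hchar (m+1) (by omega) j).mp hjI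
          by_cases hcase : up m < k
          · exact hj2 (up m) (by omega) hcase (hRmono _ _ j hu3 hj)
          · have hklt : k < up m := by omega
            exact hu4 k hmk hklt (hcmp m k j hmk hkl hj hj1)
        rw [Finset.sdiff_eq_self_of_disjoint hdisj, ih (m+1) (by omega), hins,
          Finset.filter_insert, if_neg hum]
  have := hmain k 0 (by omega)
  rwa [Finset.range_eq_Ico]
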